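/- Let x, y : ℤ → ℝ be finitely supported signals, and suppose there exist ν ∈ ℤ and a real number a > 0 such that x[n] = a · y[n + ν] for all n ∈ ℤ. Let sgn : ℝ → ℝ be the sign function (sgn(t) = 1 for t > 0, sgn(0) = 0, sgn(t) = −1 for t < 0). Then the cross-correlation function of sgn ∘ x and sgn ∘ y is maximized at ν; that is, ((sgn ∘ x) ⋆ (sgn ∘ y))[n] ≤ ((sgn ∘ x) ⋆ (sgn ∘ y))[ν] for all n ∈ ℤ. -/
import Mathlib

lemma sign_mul_pos_left {a t : ℝ} (ha : 0 < a) : Real.sign (a * t) = Real.sign t := by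
  rcases lt_trichotomy t 0 with h | h | h
  · rw [Real.sign_of_neg h, Real.sign_of_neg (mul_neg_of_pos_of_neg ha h)]
  · simp [h, Real.sign_zero]
  · rw [Real.sign_of_pos h, Real.sign_of_pos (mul_pos ha h)]

lemma sign_mul_le_sq (s t : ℝ) : Real.sign s * Real.sign t ≤ Real.sign s * Real.sign s := by
  rcases Real.sign_apply_eq s with h | h | h <;>
    rcases Real.sign_apply_eq t with h' | h' | h' <;> rw [h, h'] <;> norm_num

/-- If `x[n] = a * y[n + ν]` for all `n` with `a > 0`, then the
cross-correlation of `sign ∘ x` and `sign ∘ y` is maximized at `ν`. -/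
theorem crosscorr_sign_max_at_shift
    (x y : ℤ → ℝ)
    (hx : (Function.support x).Finite)
    (hy : (Function.support y).Finite)
    (ν : ℤ) (a : ℝ) (ha : 0 < a)
    (hxy : ∀ n : ℤ, x n = a * y (n + ν)) :
    ∀ n : ℤ,
      (∑ᶠ m : ℤ, Real.sign (x m) * Real.sign (y (m + n))) ≤
        ∑ᶠ m : ℤ, Real.sign (x m) * Real.sign (y (m + ν)) := by
  intro n
  have hsub : ∀ k : ℤ,
      (Function.support fun m => Real.sign (x m) * Real.sign (y (m + k))) ⊆ hx.toFinset := by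
    intro k m hm
    simp only [Function.mem_support] at hm
    simp only [Set.Finite.coe_toFinset, Function.mem_support]
    intro hxm
    apply hm
    rw [hxm, Real.sign_zero, zero_mul]
  rw [finsum_eq_finset_sum_of_support_subset _ (hsub n),
      finsum_eq_finset_sum_of_support_subset _ (hsub ν)]
  apply Finset.sum_le_sum
  intro m _
  have hsx : Real.sign (x m) = Real.sign (y (m + ν)) := by
    rw [hxy m, sign_mul_pos_left ha]
  calc Real.sign (x m) * Real.sign (y (m + n))
      ≤ Real.sign (x m) * Real.sign (x m) := sign_mul_le_sq _ _
    _ = Real.sign (x m) * Real.sign (y (m + ν)) := by rw [hsx]
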